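/- For n ≥ 3, β ≥ 0, consider f_β(z) = -∑_{i=1}^n zᵢ log zᵢ + (β/2)∑_{i=1}^n zᵢ² on the simplex {z ∈ [0,1]ⁿ : ∑zᵢ = 1} (with 0·log 0 = 0). The uniform vector z = (1/n,…,1/n) is a critical point of f_β restricted to the simplex for every β, and it is a strict local maximum whenever β < n. -/

import Mathlib

/-- The mean-field Potts free-energy functional `f_β` on `n` symbols. -/
noncomputable def pottsF (n : ℕ) (β : ℝ) (z : Fin n → ℝ) : ℝ :=
  -∑ i, z i * Real.log (z i) + β / 2 * ∑ i, (z i) ^ 2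

/-- The single-coordinate summand of `pottsF`. -/
noncomputable def pottsG (β x : ℝ) : ℝ := -(x * Real.log x) + β / 2 * x ^ 2

lemma hasDerivAt_pottsG (β : ℝ) {x : ℝ} (hx : x ≠ 0) :
    HasDerivAt (pottsG β) (-(Real.log x + 1) + β * x) x := by
  have h1 := (Real.hasDerivAt_mul_log hx).neg
  have h2 := (hasDerivAt_pow 2 x).const_mul (β / 2)
  have := h1.add h2
  exact this.congr_deriv (by ring)

lemma pottsF_eq_sum (n : ℕ) (β : ℝ) (z : Fin n → ℝ) :
    pottsF n β z = ∑ i, pottsG β (z i) := by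
  simp [pottsF, pottsG, Finset.sum_add_distrib, Finset.mul_sum]

lemma strictConcaveOn_pottsG (β a b : ℝ) (ha : 0 < a)
    (hb : ∀ x ∈ Set.Icc a b, β * x < 1) :
    StrictConcaveOn ℝ (Set.Icc a b) (pottsG β) := by
  apply strictConcaveOn_of_deriv2_neg (convex_Icc a b)
  · apply Continuous.continuousOn
    exact (Real.continuous_mul_log.neg).add (continuous_const.mul (continuous_pow 2))
  · intro x hx
    rw [interior_Icc] at hx
    have hx0 : 0 < x := lt_trans ha hx.1
    have hxIcc : x ∈ Set.Icc a b := ⟨hx.1.le, hx.2.le⟩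
    have hd2 : deriv^[2] (pottsG β) x = -x⁻¹ + β := by
      have hev : deriv (pottsG β) =ᶠ[nhds x] (fun y => -(Real.log y + 1) + β * y) := by
        filter_upwards [eventually_ne_nhds hx0.ne'] with y hy
        exact (hasDerivAt_pottsG β hy).deriv
      have h2 : deriv^[2] (pottsG β) x = deriv (fun y => -(Real.log y + 1) + β * y) x := by
        simp only [Function.iterate_succ, Function.iterate_zero, Function.comp_apply, id]
        exact Filter.EventuallyEq.deriv_eq hev
      rw [h2]
      have hD : HasDerivAt (fun y => -(Real.log y + 1) + β * y) (-x⁻¹ + β) x := by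
        have := ((Real.hasDerivAt_log hx0.ne').add_const 1).neg.add
          ((hasDerivAt_id x).const_mul β)
        exact this.congr_deriv (by ring)
      exact hD.deriv
    rw [hd2]
    have h1 : β * x < 1 := hb x hxIcc
    have : β < x⁻¹ := by
      rw [← one_div]
      exact (lt_div_iff₀ hx0).2 h1
    linarith

/-- For the mean-field Potts model, the uniform vector `(1/n,…,1/n)` is a critical
point of `f_β` restricted to the simplex for every `β ≥ 0`, and it is a strict local
maximum whenever `β < n`. -/
theorem potts_uniform_critical (n : ℕ) (hn : 3 ≤ n) (β : ℝ) (hβ : 0 ≤ β) :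
    (∀ v : Fin n → ℝ, (∑ i, v i) = 0 →
      HasDerivAt (fun t : ℝ => pottsF n β (fun i => 1 / n + t * v i)) 0 0) ∧
    ((β : ℝ) < n → ∃ ε > 0, ∀ z : Fin n → ℝ, (∀ i, 0 ≤ z i) → (∑ i, z i) = 1 →
      z ≠ (fun _ => 1 / n : Fin n → ℝ) → dist z (fun _ => 1 / n) < ε →
      pottsF n β z < pottsF n β (fun _ => 1 / n)) := by
  have hN : (0 : ℝ) < n := by positivity
  have h1n : (1 / n : ℝ) ≠ 0 := by positivity
  set N : ℝ := (n : ℝ) with hNdef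
  constructor
  · -- criticality
    intro v hv
    set c : ℝ := -(Real.log (1 / N) + 1) + β * (1 / N) with hc
    have key : ∀ i : Fin n,
        HasDerivAt (fun t : ℝ => pottsG β (1 / N + t * v i)) (c * v i) 0 := by
      intro i
      have hin : HasDerivAt (fun t : ℝ => 1 / N + t * v i) (v i) 0 := by
        simpa using ((hasDerivAt_id (0 : ℝ)).mul_const (v i)).const_add (1 / N)
      have hval : (1 : ℝ) / N + 0 * v i = 1 / N := by ring
      have hout : HasDerivAt (pottsG β) c ((fun t : ℝ => 1 / N + t * v i) 0) := by
        simp only [hval]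
        exact hasDerivAt_pottsG β h1n
      exact hout.comp 0 hin
    have hsum := HasDerivAt.sum (fun i (_ : i ∈ Finset.univ) => key i)
    have hfun : (fun t : ℝ => ∑ i, pottsG β (1 / N + t * v i))
        = (fun t : ℝ => pottsF n β (fun i => 1 / N + t * v i)) := by
      funext t
      rw [pottsF_eq_sum]
    have hder : (∑ i, c * v i) = 0 := by
      rw [← Finset.mul_sum, hv, mul_zero]
    rw [Finset.sum_fn, hfun, hder] at hsum
    exact hsum
  · -- strict local maximum
    intro hβn
    set ε : ℝ := min (1 / (2 * N)) ((N - β) / (2 * N * (β + 1))) with hεdef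
    have hNβ : 0 < N - β := by linarith
    have hβ1 : (0 : ℝ) < β + 1 := by linarith
    have hε : 0 < ε := by
      apply lt_min
      · positivity
      · positivity
    refine ⟨ε, hε, ?_⟩
    intro z hz0 hz1 hzne hzd
    have hε1 : ε ≤ 1 / (2 * N) := min_le_left _ _
    have hε2 : ε ≤ (N - β) / (2 * N * (β + 1)) := min_le_right _ _
    set a : ℝ := 1 / N - ε with hadef
    set b : ℝ := 1 / N + ε with hbdef
    have huN : N * (1 / N) = 1 := by field_simp
    have ha : 0 < a := by
      have : 1 / (2 * N) < 1 / N := by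
        rw [div_lt_div_iff₀ (by positivity) hN]
        nlinarith
      simp only [hadef]
      linarith
    -- the key bound : β x < 1 on [a,b]
    have hεb : ε * (2 * N * (β + 1)) ≤ N - β :=
      (le_div_iff₀ (by positivity)).1 hε2
    have hbe : 2 * N * β * ε < N - β := by
      nlinarith [mul_le_mul_of_nonneg_left hεb hβ, mul_nonneg (mul_nonneg (mul_nonneg
        (by norm_num : (0:ℝ) ≤ 2) hN.le) hβ) hε.le]
    have hb : ∀ x ∈ Set.Icc a b, β * x < 1 := by
      intro x hx
      have hxb : x ≤ 1 / N + ε := hx.2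
      have h2 : N * (β * x) ≤ N * (β * (1 / N + ε)) :=
        mul_le_mul_of_nonneg_left (mul_le_mul_of_nonneg_left hxb hβ) hN.le
      have h3 : N * (β * (1 / N + ε)) = β * (N * (1 / N)) + N * β * ε := by ring
      rw [h3, huN] at h2
      have h4 : N * (β * x) < N := by linarith
      have h5 : N * (β * x) < N * 1 := by rw [mul_one]; linarith
      exact (mul_lt_mul_iff_right₀ hN).1 h5
    have hconc := strictConcaveOn_pottsG β a b ha hb
    -- memberships
    have hmem : ∀ i : Fin n, z i ∈ Set.Icc a b := by
      intro i
      have hdi : dist (z i) ((fun _ : Fin n => 1 / N) i) ≤ dist z (fun _ => 1 / N) :=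
        dist_le_pi_dist z (fun _ => 1 / N) i
      have : |z i - 1 / N| < ε := by
        rw [← Real.dist_eq]
        exact lt_of_le_of_lt hdi hzd
      have habs := abs_lt.1 this
      constructor <;> [simp only [hadef]; simp only [hbdef]] <;> linarith [habs.1, habs.2]
    have hmid : (1 / N : ℝ) ∈ Set.Icc a b := by
      constructor <;> [simp only [hadef]; simp only [hbdef]] <;> linarith
    -- nonconstancy
    have hj : ∃ j, z j ≠ 1 / N := by
      by_contra h
      push_neg at h
      exact hzne (funext h)
    obtain ⟨j, hjne⟩ := hj
    have hk : ∃ k, z k ≠ z j := by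
      by_contra h
      push_neg at h
      have : (∑ i, z i) = N * z j := by
        rw [Finset.sum_congr rfl (fun i _ => h i)]
        simp [Finset.sum_const, hNdef, mul_comm]
      rw [hz1] at this
      apply hjne
      field_simp
      linarith [this]
    obtain ⟨k, hkne⟩ := hk
    -- strict Jensen
    have hjensen := hconc.lt_map_sum (t := Finset.univ) (w := fun _ : Fin n => 1 / N)
      (p := z) (fun i _ => by positivity)
      (by simp [Finset.sum_const, Finset.card_univ]; field_simp; rfl)
      (fun i _ => hmem i) ⟨k, Finset.mem_univ k, j, Finset.mem_univ j, hkne⟩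
    have hsz : (∑ i, (1 / N : ℝ) • z i) = 1 / N := by
      simp only [smul_eq_mul, ← Finset.mul_sum, hz1, mul_one]
    rw [hsz] at hjensen
    have hjens2 : (1 / N) * ∑ i, pottsG β (z i) < pottsG β (1 / N) := by
      calc (1 / N) * ∑ i, pottsG β (z i) = ∑ i, (1 / N : ℝ) • pottsG β (z i) := by
            simp [Finset.mul_sum]
        _ < pottsG β (1 / N) := hjensen
    have hfinal : ∑ i, pottsG β (z i) < N * pottsG β (1 / N) := by
      have := mul_lt_mul_of_pos_left hjens2 hN
      calc ∑ i, pottsG β (z i) = N * ((1 / N) * ∑ i, pottsG β (z i)) := by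
            rw [← mul_assoc, huN, one_mul]
        _ < N * pottsG β (1 / N) := this
    rw [pottsF_eq_sum, pottsF_eq_sum]
    calc ∑ i, pottsG β (z i) < N * pottsG β (1 / N) := hfinal
      _ = ∑ _i : Fin n, pottsG β (1 / N) := by
          simp [Finset.sum_const, Finset.card_univ, hNdef, nsmul_eq_mul]
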